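/- Reconstruction via multiple rank-1 lattices: Let I ⊂ Z^d be finite and Λ = Λ(z_1,M_1,...,z_L,M_L) a multiple rank-1 lattice fulfilling ∪_{ℓ=1}^L I_ℓ = I with I_ℓ := {k ∈ I : k·z_ℓ ≢ h·z_ℓ (mod M_ℓ) ∀h ∈ I\{k}}. Then every trigonometric polynomial p ∈ Π_I is exactly recovered by the averaging procedure: for each k ∈ I, p̂_k = (1/|L_k|)·Σ_{ℓ∈L_k} (1/M_ℓ)·Σ_{j=0}^{M_ℓ−1} p((j/M_ℓ)z_ℓ mod 1)·e^{−2πi j k·z_ℓ/M_ℓ}, where L_k := {ℓ : k ∈ I_ℓ}. -/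

import Mathlib

open scoped BigOperators

lemma expsum (M : ℕ) (hM : 0 < M) (n : ℤ) :
    ∑ j ∈ Finset.range M, Complex.exp (2 * (Real.pi : ℂ) * Complex.I * (j : ℂ) * (n : ℂ) / (M : ℂ)) =
      if (M : ℤ) ∣ n then (M : ℂ) else 0 := by
  have hMc : (M : ℂ) ≠ 0 := Nat.cast_ne_zero.mpr hM.ne'
  set ω : ℂ := Complex.exp (2 * (Real.pi : ℂ) * Complex.I * (n : ℂ) / (M : ℂ)) with hω
  have hpow : ∀ j : ℕ, Complex.exp (2 * (Real.pi : ℂ) * Complex.I * (j : ℂ) * (n : ℂ) / (M : ℂ)) = ω ^ j := by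
    intro j
    rw [hω, ← Complex.exp_nat_mul]
    ring_nf
  have hsum : ∑ j ∈ Finset.range M, Complex.exp (2 * (Real.pi : ℂ) * Complex.I * (j : ℂ) * (n : ℂ) / (M : ℂ)) = ∑ j ∈ Finset.range M, ω ^ j := Finset.sum_congr rfl fun j _ => hpow j
  rw [hsum]
  have hωM : ω ^ M = 1 := by
    rw [hω, ← Complex.exp_nat_mul]
    have : (M : ℂ) * (2 * (Real.pi : ℂ) * Complex.I * (n : ℂ) / (M : ℂ)) = (n : ℂ) * (2 * (Real.pi : ℂ) * Complex.I) := by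
      field_simp
    rw [this, Complex.exp_int_mul_two_pi_mul_I]
  have hω1 : ω = 1 ↔ (M : ℤ) ∣ n := by
    rw [hω, Complex.exp_eq_one_iff]
    constructor
    · rintro ⟨m, hm⟩
      refine ⟨m, ?_⟩
      have h2 : (2 * (Real.pi : ℂ) * Complex.I) ≠ 0 := by
        simp [Real.pi_ne_zero, Complex.I_ne_zero, Complex.ofReal_ne_zero]
      have key : (2 * (Real.pi : ℂ) * Complex.I) * (n : ℂ)
          = (2 * (Real.pi : ℂ) * Complex.I) * ((M : ℂ) * (m : ℂ)) := by
        have h3 := congrArg (· * (M : ℂ)) hm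
        field_simp at h3
        linear_combination (2 * (Real.pi : ℂ) * Complex.I) * h3
      have : (n : ℂ) = (M : ℂ) * (m : ℂ) := mul_left_cancel₀ h2 key
      exact_mod_cast this
    · rintro ⟨m, rfl⟩
      refine ⟨m, ?_⟩
      push_cast
      field_simp
  by_cases h : (M : ℤ) ∣ n
  · simp [h, hω1.mpr h]
  · rw [if_neg h]
    have hne : ω ≠ 1 := fun hc => h (hω1.mp hc)
    rw [geom_sum_eq hne, hωM]
    simp

/-- `k ∈ I` is uniquely reconstructable w.r.t. the rank-1 lattice `Λ(z,M)` within `I`. -/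
def uniqRec (d : ℕ) (I : Finset (Fin d → ℤ)) (z : Fin d → ℤ) (M : ℕ) (k : Fin d → ℤ) : Prop :=
  ∀ h ∈ I, h ≠ k → ¬ ((∑ s, k s * z s) ≡ (∑ s, h s * z s) [ZMOD (M : ℤ)])

open scoped Classical in
/-- `L_k`: the set of lattice indices `ℓ` for which `k` is uniquely reconstructable. -/
noncomputable def Lset (d L : ℕ) (I : Finset (Fin d → ℤ)) (z : Fin L → Fin d → ℤ)
    (M : Fin L → ℕ) (k : Fin d → ℤ) : Finset (Fin L) :=
  Finset.univ.filter fun ℓ => uniqRec d I (z ℓ) (M ℓ) k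

theorem stmt19 (d L : ℕ) (I : Finset (Fin d → ℤ)) (z : Fin L → Fin d → ℤ) (M : Fin L → ℕ)
    (hM : ∀ ℓ, 0 < M ℓ) (phat : (Fin d → ℤ) → ℂ)
    (hrec : ∀ k ∈ I, ∃ ℓ, uniqRec d I (z ℓ) (M ℓ) k) :
    ∀ k ∈ I, phat k =
      ((Lset d L I z M k).card : ℂ)⁻¹ *
        ∑ ℓ ∈ Lset d L I z M k, (1 / (M ℓ : ℂ)) *
          ∑ j ∈ Finset.range (M ℓ),
            (∑ k' ∈ I, phat k' *
              Complex.exp (2 * (Real.pi : ℂ) * Complex.I * (j : ℂ) *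
                (∑ s, (k' s : ℂ) * ((z ℓ) s : ℂ)) / (M ℓ : ℂ))) *
            Complex.exp (-(2 * (Real.pi : ℂ) * Complex.I) * (j : ℂ) *
              (∑ s, (k s : ℂ) * ((z ℓ) s : ℂ)) / (M ℓ : ℂ)) := by
  intro k hk
  classical
  have hterm : ∀ ℓ ∈ Lset d L I z M k,
      (1 / (M ℓ : ℂ)) *
          ∑ j ∈ Finset.range (M ℓ),
            (∑ k' ∈ I, phat k' *
              Complex.exp (2 * (Real.pi : ℂ) * Complex.I * (j : ℂ) *
                (∑ s, (k' s : ℂ) * ((z ℓ) s : ℂ)) / (M ℓ : ℂ))) *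
            Complex.exp (-(2 * (Real.pi : ℂ) * Complex.I) * (j : ℂ) *
              (∑ s, (k s : ℂ) * ((z ℓ) s : ℂ)) / (M ℓ : ℂ)) = phat k := by
    intro ℓ hℓ
    have hur : uniqRec d I (z ℓ) (M ℓ) k := by
      simpa [Lset] using hℓ
    have hMc : ((M ℓ) : ℂ) ≠ 0 := Nat.cast_ne_zero.mpr (hM ℓ).ne'
    have hswap : ∑ j ∈ Finset.range (M ℓ),
            (∑ k' ∈ I, phat k' *
              Complex.exp (2 * (Real.pi : ℂ) * Complex.I * (j : ℂ) *
                (∑ s, (k' s : ℂ) * ((z ℓ) s : ℂ)) / (M ℓ : ℂ))) *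
            Complex.exp (-(2 * (Real.pi : ℂ) * Complex.I) * (j : ℂ) *
              (∑ s, (k s : ℂ) * ((z ℓ) s : ℂ)) / (M ℓ : ℂ))
        = ∑ k' ∈ I, phat k' *
            ∑ j ∈ Finset.range (M ℓ),
              Complex.exp (2 * (Real.pi : ℂ) * Complex.I * (j : ℂ) *
                (((∑ s, k' s * z ℓ s) - (∑ s, k s * z ℓ s) : ℤ) : ℂ) / (M ℓ : ℂ)) := by
      simp_rw [Finset.sum_mul]
      rw [Finset.sum_comm]
      refine Finset.sum_congr rfl fun k' _ => ?_
      rw [Finset.mul_sum]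
      refine Finset.sum_congr rfl fun j _ => ?_
      rw [mul_assoc, ← Complex.exp_add]
      congr 2
      push_cast
      field_simp
      ring
    rw [hswap]
    have hone : ∑ k' ∈ I, phat k' *
            ∑ j ∈ Finset.range (M ℓ),
              Complex.exp (2 * (Real.pi : ℂ) * Complex.I * (j : ℂ) *
                (((∑ s, k' s * z ℓ s) - (∑ s, k s * z ℓ s) : ℤ) : ℂ) / (M ℓ : ℂ))
        = phat k * (M ℓ : ℂ) := by
      rw [Finset.sum_eq_single k]
      · rw [expsum (M ℓ) (hM ℓ) _ , if_pos (by simp)]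
      · intro k' hk' hne
        rw [expsum (M ℓ) (hM ℓ) _, if_neg, mul_zero]
        intro hdvd
        exact hur k' hk' hne ((Int.modEq_iff_dvd).mpr hdvd)
      · intro h; exact absurd hk h
    rw [hone]
    field_simp
  rw [Finset.sum_congr rfl hterm, Finset.sum_const, nsmul_eq_mul]
  have hCne : (Lset d L I z M k).Nonempty := by
    obtain ⟨ℓ, hℓ⟩ := hrec k hk
    exact ⟨ℓ, by simp [Lset, hℓ]⟩
  have hc : ((Lset d L I z M k).card : ℂ) ≠ 0 := by
    exact_mod_cast Nat.cast_ne_zero.mpr (Finset.card_ne_zero_of_mem hCne.choose_spec)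
  field_simp
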